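/- Let ε > 0, let L be a positive integer, and let δ > 0 satisfy 2δ ≤ L·(L+1). Let η_1, …, η_L be random variables on a common probability space, each distributed according to the Laplace density with scale (L+1)/ε. Then P(∑_{j=1}^L η_j ≤ −(L·(L+1)/ε)·log(L·(L+1)/(2δ))) ≤ δ. Equivalently, with probability at least 1 − δ, adding the offset (L·(L+1)/ε)·log(L·(L+1)/(2δ)) plus the noise ∑_j η_j to any real number y yields a value at least y. -/

import Mathlib

open MeasureTheory Real Set Filter
open scoped ENNReal

lemma laplace_integrableOn_exp_div (b : ℝ) (hb : 0 < b) (x : ℝ) :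
    IntegrableOn (fun t : ℝ => Real.exp (t / b)) (Iic x) volume := by
  have h1 : Integrable ((Iic (x / b)).indicator Real.exp) volume :=
    (integrable_indicator_iff measurableSet_Iic).2 (integrableOn_exp_Iic _)
  have h2 := h1.comp_div (show b ≠ 0 from hb.ne')
  rw [← integrable_indicator_iff measurableSet_Iic]
  convert h2 using 1
  · rfl
  funext t
  simp [Set.indicator_apply, Set.mem_Iic, div_le_div_iff_of_pos_right hb]

lemma laplace_tail_integral (b : ℝ) (hb : 0 < b) (x : ℝ) :
    ∫ t in Iic x, (1 / (2 * b)) * Real.exp (t / b) = (1 / 2) * Real.exp (x / b) := by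
  have hderiv : ∀ t ∈ Iic x, HasDerivAt (fun t : ℝ => (1 / 2) * Real.exp (t / b))
      ((1 / (2 * b)) * Real.exp (t / b)) t := by
    intro t _
    have h1 : HasDerivAt (fun t : ℝ => t / b) (1 / b) t := by
      simpa using (hasDerivAt_id t).div_const b
    have h2 := (h1.exp).const_mul (1 / 2 : ℝ)
    convert h2 using 1
    · rfl
    · rfl
    field_simp
  have hint : IntegrableOn (fun t : ℝ => (1 / (2 * b)) * Real.exp (t / b)) (Iic x) volume :=
    (laplace_integrableOn_exp_div b hb x).const_mul _
  have htend : Tendsto (fun t : ℝ => (1 / 2) * Real.exp (t / b)) atBot (nhds 0) := by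
    have : Tendsto (fun t : ℝ => t / b) atBot atBot := tendsto_id.atBot_div_const hb
    simpa using (Real.tendsto_exp_atBot.comp this).const_mul (1 / 2 : ℝ)
  rw [integral_Iic_of_hasDerivAt_of_tendsto' hderiv hint htend]
  ring

lemma laplace_tail_measure (b : ℝ) (hb : 0 < b) (x : ℝ) (hx : x ≤ 0) :
    (MeasureTheory.volume.withDensity
        (fun t : ℝ => ENNReal.ofReal ((1 / (2 * b)) * Real.exp (-|t| / b)))) (Iic x)
      = ENNReal.ofReal ((1 / 2) * Real.exp (x / b)) := by
  rw [withDensity_apply _ measurableSet_Iic]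
  have hcongr : ∀ᵐ t ∂(volume.restrict (Iic x)),
      ENNReal.ofReal ((1 / (2 * b)) * Real.exp (-|t| / b))
        = ENNReal.ofReal ((1 / (2 * b)) * Real.exp (t / b)) := by
    filter_upwards [ae_restrict_mem measurableSet_Iic] with t ht
    have : t ≤ 0 := le_trans ht hx
    rw [abs_of_nonpos this, neg_neg]
  rw [lintegral_congr_ae hcongr,
    ← MeasureTheory.ofReal_integral_eq_lintegral_ofReal
      ((laplace_integrableOn_exp_div b hb x).const_mul _)
      (ae_of_all _ fun t => by positivity),
    laplace_tail_integral b hb x]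

theorem laplace_sum_high_prob_upper_bound {Ω : Type*} [MeasurableSpace Ω]
    (P : MeasureTheory.Measure Ω) [MeasureTheory.IsProbabilityMeasure P]
    (ε δ : ℝ) (L : ℕ) (hL : 0 < L) (hε : 0 < ε) (hδ : 0 < δ)
    (hδL : 2 * δ ≤ (L : ℝ) * ((L : ℝ) + 1))
    (η : Fin L → Ω → ℝ) (hmeas : ∀ j, Measurable (η j))
    (hlaw : ∀ j, P.map (η j) =
      MeasureTheory.volume.withDensity
        (fun t : ℝ => ENNReal.ofReal
          ((1 / (2 * (((L : ℝ) + 1) / ε))) * Real.exp (-|t| / (((L : ℝ) + 1) / ε))))) :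
    P {ω | ∑ j, η j ω ≤
        -((L : ℝ) * ((L : ℝ) + 1) / ε) * Real.log ((L : ℝ) * ((L : ℝ) + 1) / (2 * δ))}
      ≤ ENNReal.ofReal δ := by
  set b : ℝ := ((L : ℝ) + 1) / ε with hb_def
  have hLpos : (0 : ℝ) < L := Nat.cast_pos.2 hL
  have hb : 0 < b := div_pos (by linarith) hε
  set R : ℝ := (L : ℝ) * ((L : ℝ) + 1) / (2 * δ) with hR_def
  have hR1 : 1 ≤ R := (one_le_div (by linarith)).2 hδL
  have hRpos : 0 < R := lt_of_lt_of_le one_pos hR1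
  set c : ℝ := b * Real.log R with hc_def
  have hc0 : 0 ≤ c := mul_nonneg hb.le (Real.log_nonneg hR1)
  -- threshold equals L * (-c)
  have hthr : -((L : ℝ) * ((L : ℝ) + 1) / ε) * Real.log R = (L : ℝ) * (-c) := by
    rw [hc_def, hb_def]; ring
  -- inclusion in union
  have hsub : {ω | ∑ j, η j ω ≤ -((L : ℝ) * ((L : ℝ) + 1) / ε) * Real.log R}
      ⊆ ⋃ j, {ω | η j ω ≤ -c} := by
    intro ω hω
    by_contra h
    simp only [Set.mem_iUnion, Set.mem_setOf_eq, not_exists, not_le] at h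
    have : (L : ℝ) * (-c) < ∑ j, η j ω := by
      calc (L : ℝ) * (-c) = ∑ _j : Fin L, (-c) := by
            rw [Finset.sum_const, Finset.card_univ, Fintype.card_fin, nsmul_eq_mul]
        _ < ∑ j, η j ω := Finset.sum_lt_sum_of_nonempty
            (Finset.univ_nonempty_iff.2 ⟨⟨0, hL⟩⟩) (fun j _ => h j)
    rw [hthr] at hω
    exact absurd hω (not_le.2 this)
  -- single tail probability
  have hsingle : ∀ j, P {ω | η j ω ≤ -c} = ENNReal.ofReal (δ / ((L : ℝ) * ((L : ℝ) + 1))) := by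
    intro j
    have : P {ω | η j ω ≤ -c} = (P.map (η j)) (Iic (-c)) := by
      rw [Measure.map_apply (hmeas j) measurableSet_Iic]; rfl
    rw [this, hlaw j, laplace_tail_measure b hb (-c) (neg_nonpos.2 hc0)]
    congr 1
    have hcb : -c / b = -Real.log R := by rw [hc_def]; field_simp
    rw [hcb, Real.exp_neg, Real.exp_log hRpos, hR_def]
    field_simp
  calc P {ω | ∑ j, η j ω ≤ -((L : ℝ) * ((L : ℝ) + 1) / ε) * Real.log R}
      ≤ ∑ j : Fin L, P {ω | η j ω ≤ -c} := le_trans (measure_mono hsub) (measure_iUnion_fintype_le _ _)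
    _ = (L : ℝ≥0∞) * ENNReal.ofReal (δ / ((L : ℝ) * ((L : ℝ) + 1))) := by
        simp [hsingle, Finset.sum_const, mul_comm]
    _ = ENNReal.ofReal ((L : ℝ) * (δ / ((L : ℝ) * ((L : ℝ) + 1)))) := by
        rw [ENNReal.ofReal_mul (by positivity), ENNReal.ofReal_natCast]
    _ ≤ ENNReal.ofReal δ := by
        apply ENNReal.ofReal_le_ofReal
        rw [show (L : ℝ) * (δ / ((L : ℝ) * ((L : ℝ) + 1))) = δ / ((L : ℝ) + 1) by
          field_simp]
        rw [div_le_iff₀ (by linarith)]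
        nlinarith
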